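/- Let n, σ be positive integers with σ ≤ n - 1, and let D_{n,σ} denote the set of Wheeler DFAs with states [n], effective alphabet [σ], any number of transitions, and Wheeler order 1 < ... < n. Then |D_{n,σ}| ≥ 2^{nσ - n + 1} · C(nσ-σ, n-1-σ), and hence log₂|D_{n,σ}| ≥ nσ + (n-σ)·log₂σ - (n + log₂σ). -/

import Mathlib

open Finset

private def Forc (n σ : ℕ) : Finset ℕ := (range σ).image (· * n)
private def NFr (n σ : ℕ) : Finset ℕ := range (n*σ) \ Forc n σ
private def cnt (L : Finset ℕ) (p : ℕ) : ℕ := (L.filter (· ≤ p)).card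

private lemma Forc_card {n : ℕ} (σ : ℕ) (hn : 0 < n) : (Forc n σ).card = σ := by
  rw [Forc, card_image_of_injective _ (fun a b h => Nat.eq_of_mul_eq_mul_right hn h), card_range]

private lemma Forc_sub {n σ : ℕ} (hn : 0 < n) : Forc n σ ⊆ range (n*σ) := by
  intro x hx
  simp only [Forc, mem_image, mem_range] at hx ⊢
  obtain ⟨a, ha, rfl⟩ := hx
  calc a * n < σ * n := (Nat.mul_lt_mul_right hn).2 ha
  _ = n * σ := Nat.mul_comm _ _

private lemma NFr_card {n σ : ℕ} (hn : 0 < n) : (NFr n σ).card = n*σ - σ := by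
  rw [NFr, card_sdiff_of_subset (Forc_sub hn), Forc_card σ hn, card_range]

private lemma cnt_le (L : Finset ℕ) (p : ℕ) : cnt L p ≤ L.card := card_filter_le _ _

private lemma cnt_mono (L : Finset ℕ) {p q : ℕ} (h : p ≤ q) : cnt L p ≤ cnt L q := by
  apply card_le_card
  intro x hx
  simp only [mem_filter] at hx ⊢
  exact ⟨hx.1, le_trans hx.2 h⟩

private lemma cnt_lt (L : Finset ℕ) {p q q' : ℕ} (hq' : q' ∈ L) (h1 : p < q') (h2 : q' ≤ q) :
    cnt L p < cnt L q := by
  apply card_lt_card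
  constructor
  · intro x hx
    simp only [mem_filter] at hx ⊢
    exact ⟨hx.1, le_trans hx.2 (le_trans (le_of_lt h1) h2)⟩
  · intro hsub
    have := hsub (by simp only [mem_filter]; exact ⟨hq', h2⟩)
    simp only [mem_filter] at this
    omega

private lemma cnt_pos (L : Finset ℕ) {x p : ℕ} (hx : x ∈ L) (hxp : x ≤ p) : 0 < cnt L p :=
  card_pos.2 ⟨x, by simp only [mem_filter]; exact ⟨hx, hxp⟩⟩

private lemma cnt_split (L : Finset ℕ) (p : ℕ) :
    cnt L p = (L.filter (· < p)).card + (if p ∈ L then 1 else 0) := by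
  by_cases hp : p ∈ L
  · rw [if_pos hp]
    have : L.filter (· ≤ p) = insert p (L.filter (· < p)) := by
      ext x
      simp only [mem_filter, mem_insert]
      constructor
      · rintro ⟨hxL, hxle⟩
        rcases lt_or_eq_of_le hxle with h | h
        · exact Or.inr ⟨hxL, h⟩
        · exact Or.inl h
      · rintro (rfl | ⟨hxL, hlt⟩)
        · exact ⟨hp, le_refl _⟩
        · exact ⟨hxL, le_of_lt hlt⟩
    rw [cnt, this, card_insert_of_notMem (by simp)]
  · rw [if_neg hp]
    have : L.filter (· ≤ p) = L.filter (· < p) := by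
      ext x
      simp only [mem_filter]
      constructor
      · rintro ⟨hxL, hxle⟩
        exact ⟨hxL, lt_of_le_of_ne hxle (fun h => hp (h ▸ hxL))⟩
      · rintro ⟨hxL, hlt⟩
        exact ⟨hxL, le_of_lt hlt⟩
    rw [cnt, this]
    omega

private lemma cnt_orderEmb {L : Finset ℕ} {c : ℕ} (h : L.card = c) (j : Fin c) :
    cnt L (L.orderEmbOfFin h j) = j + 1 := by
  have himg : L.filter (· ≤ L.orderEmbOfFin h j) = (Finset.Iic j).image (L.orderEmbOfFin h) := by
    ext x
    simp only [mem_filter, mem_image, mem_Iic]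
    constructor
    · rintro ⟨hxL, hxle⟩
      have : x ∈ Set.range (L.orderEmbOfFin h) := by
        rw [range_orderEmbOfFin]; exact hxL
      obtain ⟨i, rfl⟩ := this
      exact ⟨i, (OrderEmbedding.le_iff_le _).1 hxle, rfl⟩
    · rintro ⟨i, hij, rfl⟩
      exact ⟨orderEmbOfFin_mem L h i, (OrderEmbedding.le_iff_le _).2 hij⟩
  rw [cnt, himg, card_image_of_injective _ (L.orderEmbOfFin h).injective, Fin.card_Iic]

private lemma pow_factorial_le_descFactorial (s : ℕ) (hs : 0 < s) :
    ∀ k m : ℕ, s * k ≤ m → s ^ k * k.factorial ≤ m.descFactorial k := by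
  intro k
  induction k with
  | zero => intro m _; simp
  | succ k ih =>
    intro m hm
    obtain ⟨m', rfl⟩ : ∃ m', m = m' + 1 := ⟨m - 1, by have h0 : 0 < s * (k + 1) := Nat.mul_pos hs (by omega); omega⟩
    rw [Nat.succ_descFactorial_succ]
    have h1 : s * k ≤ m' := by
      have hh : s * (k+1) = s * k + s := by ring
      omega
    calc s ^ (k+1) * (k+1).factorial = (s * (k+1)) * (s ^ k * k.factorial) := by
          rw [pow_succ, Nat.factorial_succ]; ring
    _ ≤ (m' + 1) * m'.descFactorial k := Nat.mul_le_mul hm (ih m' h1)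

private lemma pow_le_choose (s k m : ℕ) (hs : 0 < s) (h : s * k ≤ m) :
    s ^ k ≤ m.choose k := by
  have h1 := pow_factorial_le_descFactorial s hs k m h
  rw [Nat.choose_eq_descFactorial_div_factorial]
  rw [Nat.le_div_iff_mul_le (Nat.factorial_pos k)]
  exact h1

private def dfaF (n σ : ℕ) (L T : Finset ℕ) (hL : L.card < n) :
    Fin n → Fin σ → Option (Fin n) :=
  fun u a => if (a.1 * n + u.1) ∈ T then none
    else some ⟨cnt L (a.1 * n + u.1), lt_of_le_of_lt (cnt_le L _) hL⟩

private lemma dfaF_eq_some_iff {n σ : ℕ} {L T : Finset ℕ} {hL : L.card < n}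
    {u : Fin n} {a : Fin σ} {v : Fin n} :
    dfaF n σ L T hL u a = some v ↔ (a.1 * n + u.1 ∉ T ∧ v.1 = cnt L (a.1 * n + u.1)) := by
  unfold dfaF
  by_cases h : a.1 * n + u.1 ∈ T <;> simp [h, Fin.ext_iff, eq_comm]

private lemma dfaF_eq_none_iff {n σ : ℕ} {L T : Finset ℕ} {hL : L.card < n}
    {u : Fin n} {a : Fin σ} :
    dfaF n σ L T hL u a = none ↔ a.1 * n + u.1 ∈ T := by
  unfold dfaF
  by_cases h : a.1 * n + u.1 ∈ T <;> simp [h]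

private lemma pos_decomp {n σ : ℕ} (hn : 0 < n) {p : ℕ} (hp : p < n * σ) :
    ∃ (a : Fin σ) (u : Fin n), a.1 * n + u.1 = p := by
  have ha : p / n < σ := by
    rw [Nat.div_lt_iff_lt_mul hn, Nat.mul_comm]; exact hp
  refine ⟨⟨p / n, ha⟩, ⟨p % n, Nat.mod_lt p hn⟩, ?_⟩
  show p / n * n + p % n = p
  rw [Nat.mul_comm]; exact Nat.div_add_mod p n

private lemma Forc_disj {n σ : ℕ} {S : Finset ℕ} (hSsub : S ⊆ NFr n σ) :
    Disjoint (Forc n σ) S := by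
  rw [Finset.disjoint_right]
  intro x hx
  have := hSsub hx
  rw [NFr, mem_sdiff] at this
  exact this.2

private lemma Lcard {n σ : ℕ} (hn : 0 < n) (hσ : 0 < σ) (hσn : σ ≤ n - 1) {S : Finset ℕ}
    (hSsub : S ⊆ NFr n σ) (hScard : S.card = n - 1 - σ) :
    (Forc n σ ∪ S).card = n - 1 := by
  rw [card_union_of_disjoint (Forc_disj hSsub), Forc_card σ hn, hScard]
  omega

private lemma Lsub {n σ : ℕ} (hn : 0 < n) {S : Finset ℕ} (hSsub : S ⊆ NFr n σ) :
    Forc n σ ∪ S ⊆ range (n * σ) := by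
  apply union_subset (Forc_sub hn)
  exact hSsub.trans (fun x hx => by rw [NFr, mem_sdiff] at hx; exact hx.1)

private lemma TL_disj {n σ : ℕ} {S T : Finset ℕ} (hSsub : S ⊆ NFr n σ)
    (hT : T ⊆ NFr n σ \ S) : ∀ p ∈ Forc n σ ∪ S, p ∉ T := by
  intro p hp hpT
  have h1 := hT hpT
  rw [mem_sdiff, NFr, mem_sdiff] at h1
  rw [mem_union] at hp
  rcases hp with h | h
  · exact h1.1.2 h
  · exact h1.2 h

private lemma forced_mem {n σ : ℕ} (S : Finset ℕ) (a : Fin σ) :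
    a.1 * n ∈ Forc n σ ∪ S := by
  apply mem_union_left
  rw [Forc, mem_image]
  exact ⟨a.1, mem_range.2 a.2, rfl⟩

private lemma dfaF_props (n σ : ℕ) (hn : 0 < n) (hσ : 0 < σ) (hσn : σ ≤ n - 1)
    (S T : Finset ℕ) (hSsub : S ⊆ NFr n σ) (hScard : S.card = n - 1 - σ)
    (hT : T ⊆ NFr n σ \ S) (hL : (Forc n σ ∪ S).card < n) :
    (∀ a : Fin σ, ∃ u v : Fin n, dfaF n σ (Forc n σ ∪ S) T hL u a = some v) ∧
    (∀ (u : Fin n) (a : Fin σ), dfaF n σ (Forc n σ ∪ S) T hL u a ≠ some ⟨0, hn⟩) ∧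
    (∀ v : Fin n, v ≠ ⟨0, hn⟩ →
      ∃ (u : Fin n) (a : Fin σ), dfaF n σ (Forc n σ ∪ S) T hL u a = some v) ∧
    (∀ (u v u' v' : Fin n) (a a' : Fin σ),
      dfaF n σ (Forc n σ ∪ S) T hL u a = some u' →
      dfaF n σ (Forc n σ ∪ S) T hL v a' = some v' → a < a' → u' < v') ∧
    (∀ (u v u' v' : Fin n) (a : Fin σ),
      dfaF n σ (Forc n σ ∪ S) T hL u a = some u' →
      dfaF n σ (Forc n σ ∪ S) T hL v a = some v' → u' ≠ v' → u < v → u' < v') := by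
  have hzero : (0 : ℕ) ∈ Forc n σ ∪ S := by
    have h := forced_mem (n := n) S ⟨0, hσ⟩
    rwa [show ((⟨0, hσ⟩ : Fin σ)).1 * n = 0 from Nat.zero_mul n] at h
  have hTL := TL_disj hSsub hT
  refine ⟨?_, ?_, ?_, ?_, ?_⟩
  · -- effective alphabet
    intro a
    refine ⟨⟨0, hn⟩, ⟨cnt (Forc n σ ∪ S) (a.1 * n + 0),
      lt_of_le_of_lt (cnt_le _ _) hL⟩, ?_⟩
    rw [dfaF_eq_some_iff]
    exact ⟨hTL _ (forced_mem S a), rfl⟩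
  · -- no incoming to source
    intro u a h
    rw [dfaF_eq_some_iff] at h
    have h1 : (0 : ℕ) = cnt (Forc n σ ∪ S) (a.1 * n + u.1) := h.2
    have h2 : 0 < cnt (Forc n σ ∪ S) (a.1 * n + u.1) := cnt_pos _ hzero (Nat.zero_le _)
    omega
  · -- every non-source state covered
    intro v hv
    have hv1 : 1 ≤ v.1 := by
      rcases Nat.eq_zero_or_pos v.1 with h | h
      · exact absurd (Fin.ext h) hv
      · exact h
    have hLc : (Forc n σ ∪ S).card = n - 1 := Lcard hn hσ hσn hSsub hScard
    have hj : v.1 - 1 < n - 1 := by have := v.2; omega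
    set j : Fin (n - 1) := ⟨v.1 - 1, hj⟩
    set p := (Forc n σ ∪ S).orderEmbOfFin hLc j with hp
    have hpL : p ∈ Forc n σ ∪ S := orderEmbOfFin_mem _ hLc j
    have hcnt : cnt (Forc n σ ∪ S) p = v.1 := by
      rw [hp, cnt_orderEmb hLc j]
      show v.1 - 1 + 1 = v.1
      omega
    have hplt : p < n * σ := by
      have := (Lsub hn hSsub) hpL
      rwa [mem_range] at this
    obtain ⟨a, u, hau⟩ := pos_decomp hn hplt
    refine ⟨u, a, ?_⟩
    rw [dfaF_eq_some_iff, hau]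
    exact ⟨hTL p hpL, hcnt.symm⟩
  · -- Wheeler axiom i
    intro u v u' v' a a' h1 h2 haa
    rw [dfaF_eq_some_iff] at h1 h2
    have hq : a'.1 * n ∈ Forc n σ ∪ S := forced_mem S a'
    have haa' : a.1 < a'.1 := haa
    have hmul : (a.1 + 1) * n ≤ a'.1 * n := Nat.mul_le_mul_right n (by omega)
    have hmul2 : (a.1 + 1) * n = a.1 * n + n := by ring
    have hu : u.1 < n := u.2
    have hlt : a.1 * n + u.1 < a'.1 * n := by omega
    have hcc : cnt (Forc n σ ∪ S) (a.1 * n + u.1) < cnt (Forc n σ ∪ S) (a'.1 * n + v.1) :=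
      cnt_lt _ hq hlt (Nat.le_add_right _ _)
    show u'.1 < v'.1
    omega
  · -- Wheeler axiom ii
    intro u v u' v' a h1 h2 hne huv
    rw [dfaF_eq_some_iff] at h1 h2
    have hle : a.1 * n + u.1 ≤ a.1 * n + v.1 := by
      have : u.1 < v.1 := huv
      omega
    have hcc : cnt (Forc n σ ∪ S) (a.1 * n + u.1) ≤ cnt (Forc n σ ∪ S) (a.1 * n + v.1) :=
      cnt_mono _ hle
    have hne' : u'.1 ≠ v'.1 := fun h => hne (Fin.ext h)
    show u'.1 < v'.1
    omega

private lemma Tcard {n σ : ℕ} (hn : 0 < n) (hσ : 0 < σ) (hσn : σ ≤ n - 1) {S : Finset ℕ}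
    (hSsub : S ⊆ NFr n σ) (hScard : S.card = n - 1 - σ) :
    (NFr n σ \ S).card = n * σ - n + 1 := by
  rw [card_sdiff_of_subset hSsub, NFr_card hn, hScard]
  have := Nat.le_mul_of_pos_right n hσ
  omega

private noncomputable def Tset (n σ : ℕ) (S : Finset ℕ)
    (h : (NFr n σ \ S).card = n * σ - n + 1) (b : Finset (Fin (n * σ - n + 1))) : Finset ℕ :=
  b.image ((NFr n σ \ S).orderEmbOfFin h)

private lemma Tset_sub {n σ : ℕ} {S : Finset ℕ} (h : (NFr n σ \ S).card = n * σ - n + 1)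
    (b : Finset (Fin (n * σ - n + 1))) : Tset n σ S h b ⊆ NFr n σ \ S := by
  intro x hx
  rw [Tset, mem_image] at hx
  obtain ⟨i, _, rfl⟩ := hx
  exact orderEmbOfFin_mem _ h i

private noncomputable def Fmap (n σ : ℕ) (hn : 0 < n) (hσ : 0 < σ) (hσn : σ ≤ n - 1)
    (x : {S : Finset ℕ // S ∈ (NFr n σ).powersetCard (n - 1 - σ)} ×
      Finset (Fin (n * σ - n + 1))) :
    {δ : Fin n → Fin σ → Option (Fin n) //
      (∀ a : Fin σ, ∃ u v : Fin n, δ u a = some v) ∧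
      (∀ (u : Fin n) (a : Fin σ), δ u a ≠ some ⟨0, hn⟩) ∧
      (∀ v : Fin n, v ≠ ⟨0, hn⟩ → ∃ (u : Fin n) (a : Fin σ), δ u a = some v) ∧
      (∀ (u v u' v' : Fin n) (a a' : Fin σ),
        δ u a = some u' → δ v a' = some v' → a < a' → u' < v') ∧
      (∀ (u v u' v' : Fin n) (a : Fin σ),
        δ u a = some u' → δ v a = some v' → u' ≠ v' → u < v → u' < v')} :=
  have hSsub : x.1.1 ⊆ NFr n σ := (mem_powersetCard.1 x.1.2).1
  have hScard : x.1.1.card = n - 1 - σ := (mem_powersetCard.1 x.1.2).2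
  have hLlt : (Forc n σ ∪ x.1.1).card < n := by
    rw [Lcard hn hσ hσn hSsub hScard]; omega
  ⟨dfaF n σ (Forc n σ ∪ x.1.1) (Tset n σ x.1.1 (Tcard hn hσ hσn hSsub hScard) x.2) hLlt,
   dfaF_props n σ hn hσ hσn x.1.1 _ hSsub hScard
     (Tset_sub (Tcard hn hσ hσn hSsub hScard) x.2) hLlt⟩

private lemma Fmap_val (n σ : ℕ) (hn : 0 < n) (hσ : 0 < σ) (hσn : σ ≤ n - 1)
    (x : {S : Finset ℕ // S ∈ (NFr n σ).powersetCard (n - 1 - σ)} ×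
      Finset (Fin (n * σ - n + 1))) :
    (Fmap n σ hn hσ hσn x).1 = dfaF n σ (Forc n σ ∪ x.1.1)
      (Tset n σ x.1.1 (Tcard hn hσ hσn (mem_powersetCard.1 x.1.2).1
        (mem_powersetCard.1 x.1.2).2) x.2)
      (by rw [Lcard hn hσ hσn (mem_powersetCard.1 x.1.2).1 (mem_powersetCard.1 x.1.2).2]
          omega) := rfl

private lemma Fmap_inj (n σ : ℕ) (hn : 0 < n) (hσ : 0 < σ) (hσn : σ ≤ n - 1) :
    Function.Injective (Fmap n σ hn hσ hσn) := by
  rintro ⟨⟨S, hS⟩, b⟩ ⟨⟨S', hS'⟩, b'⟩ h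
  have hSsub : S ⊆ NFr n σ := (mem_powersetCard.1 hS).1
  have hScard : S.card = n - 1 - σ := (mem_powersetCard.1 hS).2
  have hSsub' : S' ⊆ NFr n σ := (mem_powersetCard.1 hS').1
  have hScard' : S'.card = n - 1 - σ := (mem_powersetCard.1 hS').2
  set T := Tset n σ S (Tcard hn hσ hσn hSsub hScard) b with hTdef
  set T' := Tset n σ S' (Tcard hn hσ hσn hSsub' hScard') b' with hTdef'
  have hδ := congrArg Subtype.val h
  rw [Fmap_val, Fmap_val] at hδ
  -- hδ : dfaF over (S, T) = dfaF over (S', T')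
  have hLlt : (Forc n σ ∪ S).card < n := by
    rw [Lcard hn hσ hσn hSsub hScard]; omega
  have hLlt' : (Forc n σ ∪ S').card < n := by
    rw [Lcard hn hσ hσn hSsub' hScard']; omega
  have happ : ∀ (u : Fin n) (a : Fin σ),
      dfaF n σ (Forc n σ ∪ S) T hLlt u a = dfaF n σ (Forc n σ ∪ S') T' hLlt' u a := by
    intro u a
    exact congrFun (congrFun hδ u) a
  -- Step A : T = T'
  have hTrange : T ⊆ range (n * σ) := by
    intro x hx
    have := Tset_sub _ _ hx
    rw [mem_sdiff, NFr, mem_sdiff] at this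
    exact this.1.1
  have hTrange' : T' ⊆ range (n * σ) := by
    intro x hx
    have := Tset_sub _ _ hx
    rw [mem_sdiff, NFr, mem_sdiff] at this
    exact this.1.1
  have hTT : T = T' := by
    ext p
    by_cases hp : p < n * σ
    · obtain ⟨a, u, hau⟩ := pos_decomp hn hp
      have e1 : (p ∈ T) ↔ dfaF n σ (Forc n σ ∪ S) T hLlt u a = none := by
        rw [dfaF_eq_none_iff, hau]
      have e2 : (p ∈ T') ↔ dfaF n σ (Forc n σ ∪ S') T' hLlt' u a = none := by
        rw [dfaF_eq_none_iff, hau]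
      rw [e1, e2, happ]
    · constructor
      · intro hx; exact absurd (mem_range.1 (hTrange hx)) hp
      · intro hx; exact absurd (mem_range.1 (hTrange' hx)) hp
  -- Step B : leads agree
  have hLL : Forc n σ ∪ S = Forc n σ ∪ S' := by
    by_contra hne
    set M := ((Forc n σ ∪ S) \ (Forc n σ ∪ S')) ∪ ((Forc n σ ∪ S') \ (Forc n σ ∪ S)) with hM
    have hMne : M.Nonempty := by
      rw [nonempty_iff_ne_empty]
      intro hemp
      rw [hM, union_eq_empty, sdiff_eq_empty_iff_subset, sdiff_eq_empty_iff_subset] at hemp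
      exact hne (Subset.antisymm hemp.1 hemp.2)
    set p := M.min' hMne with hpdef
    have hpM : p ∈ M := M.min'_mem hMne
    have hpUnion : p ∈ (Forc n σ ∪ S) ∪ (Forc n σ ∪ S') := by
      rw [hM, mem_union, mem_sdiff, mem_sdiff] at hpM
      rw [mem_union]
      rcases hpM with h1 | h1
      · exact Or.inl h1.1
      · exact Or.inr h1.1
    have hprange : p < n * σ := by
      rw [mem_union] at hpUnion
      rcases hpUnion with h1 | h1
      · exact mem_range.1 (Lsub hn hSsub h1)
      · exact mem_range.1 (Lsub hn hSsub' h1)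
    have hpT : p ∉ T := by
      rw [mem_union] at hpUnion
      rcases hpUnion with h1 | h1
      · exact TL_disj hSsub (Tset_sub _ _) p h1
      · rw [hTT]; exact TL_disj hSsub' (Tset_sub _ _) p h1
    obtain ⟨a, u, hau⟩ := pos_decomp hn hprange
    have e1 : dfaF n σ (Forc n σ ∪ S) T hLlt u a
        = some ⟨cnt (Forc n σ ∪ S) (a.1 * n + u.1), lt_of_le_of_lt (cnt_le _ _) hLlt⟩ :=
      dfaF_eq_some_iff.2 ⟨by rw [hau]; exact hpT, rfl⟩
    have e2 := (happ u a) ▸ e1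
    have e3 := (dfaF_eq_some_iff.1 e2).2
    -- e3 : cnt (Forc ∪ S) pos = cnt (Forc ∪ S') pos  (up to symm)
    have hc : cnt (Forc n σ ∪ S) p = cnt (Forc n σ ∪ S') p := by
      rw [hau] at e3
      exact e3
    have hfilter : (Forc n σ ∪ S).filter (· < p) = (Forc n σ ∪ S').filter (· < p) := by
      ext x
      simp only [mem_filter]
      have hxM : x < p → x ∉ M := by
        intro hx hxM
        exact absurd (M.min'_le x hxM) (not_le.2 hx)
      constructor
      · rintro ⟨hxL, hxp⟩
        refine ⟨?_, hxp⟩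
        by_contra hxL'
        exact hxM hxp (by rw [hM, mem_union, mem_sdiff]; exact Or.inl ⟨hxL, hxL'⟩)
      · rintro ⟨hxL, hxp⟩
        refine ⟨?_, hxp⟩
        by_contra hxL'
        exact hxM hxp (by rw [hM, mem_union, mem_sdiff, mem_sdiff]; exact Or.inr ⟨hxL, hxL'⟩)
    have hs1 := cnt_split (Forc n σ ∪ S) p
    have hs2 := cnt_split (Forc n σ ∪ S') p
    rw [hM, mem_union, mem_sdiff, mem_sdiff] at hpM
    rcases hpM with h1 | h1
    · rw [if_pos h1.1, if_neg h1.2] at *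
      rw [hfilter] at hs1
      omega
    · rw [if_pos h1.1, if_neg h1.2] at *
      rw [hfilter] at hs1
      omega
  have hSS : S = S' := by
    have e1 : S = (Forc n σ ∪ S) \ Forc n σ :=
      (union_sdiff_cancel_left (Forc_disj hSsub)).symm
    have e2 : S' = (Forc n σ ∪ S') \ Forc n σ :=
      (union_sdiff_cancel_left (Forc_disj hSsub')).symm
    rw [e1, e2, hLL]
  subst hSS
  have hbb : b = b' := by
    have himg : Finset.image ((NFr n σ \ S).orderEmbOfFin (Tcard hn hσ hσn hSsub hScard)) b
        = Finset.image ((NFr n σ \ S).orderEmbOfFin (Tcard hn hσ hσn hSsub hScard)) b' := hTT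
    exact Finset.image_injective ((NFr n σ \ S).orderEmbOfFin _).injective himg
  subst hbb
  rfl


/-- The number of Wheeler DFAs with states `Fin n` (source = 0, Wheeler order = integer
order), effective alphabet `Fin σ`, and any number of transitions. -/
theorem stmt_11 (n σ : ℕ) (hn : 0 < n) (hσ : 0 < σ) (hσn : σ ≤ n - 1) :
    ((Nat.card {δ : Fin n → Fin σ → Option (Fin n) //
        -- effective alphabet: every letter labels a transition
        (∀ a : Fin σ, ∃ u v : Fin n, δ u a = some v) ∧
        -- the source has no incoming transitions
        (∀ (u : Fin n) (a : Fin σ), δ u a ≠ some ⟨0, hn⟩) ∧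
        -- every non-source state has an incoming transition
        (∀ v : Fin n, v ≠ ⟨0, hn⟩ → ∃ (u : Fin n) (a : Fin σ), δ u a = some v) ∧
        -- Wheeler axiom (i)
        (∀ (u v u' v' : Fin n) (a a' : Fin σ),
          δ u a = some u' → δ v a' = some v' → a < a' → u' < v') ∧
        -- Wheeler axiom (ii)
        (∀ (u v u' v' : Fin n) (a : Fin σ),
          δ u a = some u' → δ v a = some v' → u' ≠ v' → u < v → u' < v')} : ℝ) ≥
      2 ^ (n * σ - n + 1) * ((n * σ - σ).choose (n - 1 - σ) : ℝ)) ∧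
    Real.logb 2 (Nat.card {δ : Fin n → Fin σ → Option (Fin n) //
        (∀ a : Fin σ, ∃ u v : Fin n, δ u a = some v) ∧
        (∀ (u : Fin n) (a : Fin σ), δ u a ≠ some ⟨0, hn⟩) ∧
        (∀ v : Fin n, v ≠ ⟨0, hn⟩ → ∃ (u : Fin n) (a : Fin σ), δ u a = some v) ∧
        (∀ (u v u' v' : Fin n) (a a' : Fin σ),
          δ u a = some u' → δ v a' = some v' → a < a' → u' < v') ∧
        (∀ (u v u' v' : Fin n) (a : Fin σ),
          δ u a = some u' → δ v a = some v' → u' ≠ v' → u < v → u' < v')} : ℝ) ≥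
      (n : ℝ) * σ + ((n : ℝ) - σ) * Real.logb 2 σ - ((n : ℝ) + Real.logb 2 σ) := by
  have hn2 : 2 ≤ n := by omega
  have hnσ : n ≤ n * σ := Nat.le_mul_of_pos_right n hσ
  obtain ⟨C, hCdef⟩ : ∃ c, Nat.card {δ : Fin n → Fin σ → Option (Fin n) //
        (∀ a : Fin σ, ∃ u v : Fin n, δ u a = some v) ∧
        (∀ (u : Fin n) (a : Fin σ), δ u a ≠ some ⟨0, hn⟩) ∧
        (∀ v : Fin n, v ≠ ⟨0, hn⟩ → ∃ (u : Fin n) (a : Fin σ), δ u a = some v) ∧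
        (∀ (u v u' v' : Fin n) (a a' : Fin σ),
          δ u a = some u' → δ v a' = some v' → a < a' → u' < v') ∧
        (∀ (u v u' v' : Fin n) (a : Fin σ),
          δ u a = some u' → δ v a = some v' → u' ≠ v' → u < v → u' < v')} = c := ⟨_, rfl⟩
  rw [hCdef]
  have key : 2 ^ (n * σ - n + 1) * (n * σ - σ).choose (n - 1 - σ) ≤ C := by
    have hle := Nat.card_le_card_of_injective _ (Fmap_inj n σ hn hσ hσn)
    have h1 : Nat.card {S : Finset ℕ // S ∈ (NFr n σ).powersetCard (n - 1 - σ)}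
        = (n * σ - σ).choose (n - 1 - σ) := by
      rw [Nat.card_eq_finsetCard, card_powersetCard, NFr_card hn]
    have h2 : Nat.card (Finset (Fin (n * σ - n + 1))) = 2 ^ (n * σ - n + 1) := by
      rw [Nat.card_eq_fintype_card, Fintype.card_finset, Fintype.card_fin]
    rw [Nat.card_prod, h1, h2, hCdef] at hle
    calc 2 ^ (n * σ - n + 1) * (n * σ - σ).choose (n - 1 - σ)
        = (n * σ - σ).choose (n - 1 - σ) * 2 ^ (n * σ - n + 1) := Nat.mul_comm _ _
    _ ≤ C := hle
  clear hCdef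
  have hkle : n - 1 - σ ≤ n * σ - σ := by omega
  have hchoosepos : 0 < (n * σ - σ).choose (n - 1 - σ) := Nat.choose_pos hkle
  have hCpos : 0 < C :=
    lt_of_lt_of_le (Nat.mul_pos (Nat.pow_pos (by norm_num : (0:ℕ) < 2)) hchoosepos) key
  have keyR : ((2 ^ (n * σ - n + 1) * (n * σ - σ).choose (n - 1 - σ) : ℕ) : ℝ) ≤ (C : ℝ) :=
    Nat.cast_le.2 key
  constructor
  · rw [ge_iff_le]
    calc (2 : ℝ) ^ (n * σ - n + 1) * ((n * σ - σ).choose (n - 1 - σ) : ℝ)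
        = ((2 ^ (n * σ - n + 1) * (n * σ - σ).choose (n - 1 - σ) : ℕ) : ℝ) := by push_cast; ring
    _ ≤ (C : ℝ) := keyR
  · -- logarithmic bound
    have hmul : σ * (n - 1 - σ) ≤ n * σ - σ := by
      have h1 : σ * (n - 1 - σ) ≤ σ * (n - 1) := Nat.mul_le_mul_left σ (Nat.sub_le _ _)
      have h2 : σ * (n - 1) + σ = σ * n := by
        have h3 : σ * (n - 1) + σ * 1 = σ * ((n - 1) + 1) := (Nat.mul_add σ _ _).symm
        have h4 : (n - 1) + 1 = n := by omega
        rw [h4] at h3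
        simpa using h3
      have h5 : σ * n = n * σ := Nat.mul_comm σ n
      omega
    have hσk : σ ^ (n - 1 - σ) ≤ (n * σ - σ).choose (n - 1 - σ) :=
      pow_le_choose σ (n - 1 - σ) (n * σ - σ) hσ hmul
    have l1 : Real.logb 2 ((2 ^ (n * σ - n + 1) * (n * σ - σ).choose (n - 1 - σ) : ℕ) : ℝ)
        ≤ Real.logb 2 (C : ℝ) :=
      Real.logb_le_logb_of_le one_lt_two (by positivity) keyR
    have l2 : Real.logb 2 ((2 ^ (n * σ - n + 1) * (n * σ - σ).choose (n - 1 - σ) : ℕ) : ℝ)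
        = ((n * σ - n + 1 : ℕ) : ℝ)
          + Real.logb 2 (((n * σ - σ).choose (n - 1 - σ) : ℕ) : ℝ) := by
      push_cast
      rw [Real.logb_mul (by positivity) (by exact_mod_cast Nat.cast_pos.2 hchoosepos |>.ne'),
        Real.logb_pow, Real.logb_self_eq_one one_lt_two]
      push_cast
      ring
    have l3 : ((n - 1 - σ : ℕ) : ℝ) * Real.logb 2 (σ : ℝ)
        ≤ Real.logb 2 (((n * σ - σ).choose (n - 1 - σ) : ℕ) : ℝ) := by
      have h1 : Real.logb 2 (((σ : ℝ)) ^ (n - 1 - σ))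
          ≤ Real.logb 2 (((n * σ - σ).choose (n - 1 - σ) : ℕ) : ℝ) := by
        apply Real.logb_le_logb_of_le one_lt_two (by positivity)
        exact_mod_cast hσk
      rwa [Real.logb_pow] at h1
    have hce : ((n * σ - n + 1 : ℕ) : ℝ) = (n : ℝ) * σ - n + 1 := by
      rw [Nat.cast_add, Nat.cast_sub hnσ, Nat.cast_mul, Nat.cast_one]
    have hke : ((n - 1 - σ : ℕ) : ℝ) = (n : ℝ) - 1 - σ := by
      rw [Nat.cast_sub hσn, Nat.cast_sub (by omega : 1 ≤ n), Nat.cast_one]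
    rw [ge_iff_le]
    rw [hce] at l2
    rw [hke] at l3
    linarith
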